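/- If the left n-super finitely presented global dimension of R is finite, then it equals the n-weak injective dimension of R as a left R-module; in particular, l.n.sp.gldim(R) ≤ k if and only if Ext^{k+1}_R(K, R) = 0 for every special super finitely presented left R-module K (assuming l.n.sp.gldim(R) < ∞). -/

import Mathlib

/-!
Common definitions for formalizing "(n,k)-weak cotorsion modules" over an arbitrary
(not necessarily commutative) ring `R`.  Left `R`-modules are objects of
`ModuleCat R`, right `R`-modules are objects of `ModuleCat Rᵐᵒᵖ`.

Since Mathlib does not provide `Tor` of a right module with a left module over a
noncommutative ring, we encode the vanishing of `Tor_i^R(N, M)` (for `N` a right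
module and `M` a left module) by the equivalent condition
`Ext^i_{Rᵐᵒᵖ}(N, M⋆) = 0`, where `M⋆ = Hom_ℤ(M, ℚ/ℤ)` is the character module
(a right module).  This is equivalent because `ℚ/ℤ` is an injective cogenerator:
`Ext^i_{Rᵐᵒᵖ}(N, M⋆) ≅ (Tor_i^R(N, M))⋆`, and an abelian group vanishes iff its
character group does.
-/

open CategoryTheory

universe u

noncomputable section

/-- The character group `Hom_ℤ(N, ℚ/ℤ)`. -/
def CharGroup (N : Type u) [AddCommGroup N] : Type u := N →+ AddCircle (1 : ℚ)

instance (N : Type u) [AddCommGroup N] : AddCommGroup (CharGroup N) :=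
  inferInstanceAs (AddCommGroup (N →+ AddCircle (1 : ℚ)))

namespace CharGroup

variable {N : Type u} [AddCommGroup N]

/-- View an element of the character group as an additive monoid hom. -/
def toHom (f : CharGroup N) : N →+ AddCircle (1 : ℚ) := f

/-- Build an element of the character group from an additive monoid hom. -/
def ofHom (f : N →+ AddCircle (1 : ℚ)) : CharGroup N := f

theorem hom_ext {f g : CharGroup N} (h : ∀ m, toHom f m = toHom g m) : f = g :=
  AddMonoidHom.ext h

end CharGroup

open CharGroup in
/-- Left module structure on the character group of a right module. -/
instance charGroupModuleLeft (R : Type u) [Ring R] (N : Type u) [AddCommGroup N]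
    [Module Rᵐᵒᵖ N] : Module R (CharGroup N) where
  smul r f := ofHom ((toHom f).comp
    (AddMonoidHom.mk' (fun m => MulOpposite.op r • m) (fun a b => smul_add _ a b)))
  one_smul f := hom_ext fun m => by
    show toHom f (MulOpposite.op (1 : R) • m) = toHom f m
    rw [MulOpposite.op_one, one_smul]
  mul_smul r s f := hom_ext fun m => by
    show toHom f (MulOpposite.op (r * s) • m)
      = toHom f (MulOpposite.op s • MulOpposite.op r • m)
    rw [MulOpposite.op_mul, mul_smul]
  smul_zero r := CharGroup.hom_ext fun m => rfl
  smul_add r f g := CharGroup.hom_ext fun m => rfl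
  add_smul r s f := hom_ext fun m => by
    show toHom f (MulOpposite.op (r + s) • m)
      = toHom f (MulOpposite.op r • m) + toHom f (MulOpposite.op s • m)
    rw [MulOpposite.op_add, add_smul, map_add]
  zero_smul f := hom_ext fun m => by
    show toHom f (MulOpposite.op (0 : R) • m) = 0
    rw [MulOpposite.op_zero, zero_smul, map_zero]

open CharGroup in
/-- Right module structure on the character group of a left module. -/
instance charGroupModuleRight (R : Type u) [Ring R] (N : Type u) [AddCommGroup N]
    [Module R N] : Module Rᵐᵒᵖ (CharGroup N) where
  smul r f := ofHom ((toHom f).comp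
    (AddMonoidHom.mk' (fun m => r.unop • m) (fun a b => smul_add _ a b)))
  one_smul f := hom_ext fun m => by
    show toHom f ((1 : Rᵐᵒᵖ).unop • m) = toHom f m
    rw [MulOpposite.unop_one, one_smul]
  mul_smul r s f := hom_ext fun m => by
    show toHom f ((r * s).unop • m) = toHom f (s.unop • r.unop • m)
    rw [MulOpposite.unop_mul, mul_smul]
  smul_zero r := CharGroup.hom_ext fun m => rfl
  smul_add r f g := CharGroup.hom_ext fun m => rfl
  add_smul r s f := hom_ext fun m => by
    show toHom f ((r + s).unop • m) = toHom f (r.unop • m) + toHom f (s.unop • m)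
    rw [MulOpposite.unop_add, add_smul, map_add]
  zero_smul f := hom_ext fun m => by
    show toHom f ((0 : Rᵐᵒᵖ).unop • m) = 0
    rw [MulOpposite.unop_zero, zero_smul, map_zero]

variable (R : Type u) [Ring R]

/-- `extVanish S i A B` says that `Ext^i_S(A, B) = 0`. -/
def extVanish (S : Type u) [Ring S] (i : ℕ) (A B : ModuleCat.{u} S) : Prop :=
  Subsingleton (((Ext ℤ (ModuleCat.{u} S) i).obj (Opposite.op A)).obj B)

/-- The character module of a right `R`-module, as a left `R`-module. -/
def charLeft (N : ModuleCat.{u} Rᵐᵒᵖ) : ModuleCat.{u} R :=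
  ModuleCat.of R (CharGroup N)

/-- The character module of a left `R`-module, as a right `R`-module. -/
def charRight (M : ModuleCat.{u} R) : ModuleCat.{u} Rᵐᵒᵖ :=
  ModuleCat.of Rᵐᵒᵖ (CharGroup M)

/-- `torVanish R i N M` encodes `Tor_i^R(N, M) = 0` for a right module `N` and a
left module `M`, via the character module duality
`Ext^i_R(M, N⋆) ≅ (Tor_i^R(N, M))⋆`. -/
def torVanish (i : ℕ) (N : ModuleCat.{u} Rᵐᵒᵖ) (M : ModuleCat.{u} R) : Prop :=
  extVanish R i M (charLeft R N)

/-- `K` is a special super finitely presented `S`-module (for the parameter `n`):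
`K` is the image of `F_n → F_{n-1}` in a projective resolution
`⋯ → F_{n+1} → F_n → ⋯ → F_0 → U → 0` of some module `U` in which `F_i` is finitely
generated projective for all `i ≥ n`.  (For `n = 0` the distinguished module is `U`
itself, matching `Ext^{n+1}(U, -) ≅ Ext^1(K_{n-1}, -)`.) -/
def IsSpecialSFP (S : Type u) [Ring S] (n : ℕ) (K : ModuleCat.{u} S) : Prop :=
  ∃ (U : ModuleCat.{u} S) (F : ℕ → ModuleCat.{u} S)
    (d : ∀ i, F (i + 1) →ₗ[S] F i) (π : F 0 →ₗ[S] U),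
      (∀ i, Module.Projective S (F i)) ∧
      (∀ i, n ≤ i → Module.Finite S (F i)) ∧
      Function.Surjective π ∧ Function.Exact (d 0) π ∧
      (∀ i, Function.Exact (d (i + 1)) (d i)) ∧
      (if n = 0 then Nonempty ((K : Type u) ≃ₗ[S] U)
       else Nonempty ((K : Type u) ≃ₗ[S] LinearMap.range (d (n - 1))))

/-- The `n`-weak injective dimension of a left `S`-module `M` is at most `k`. -/
def nwidLE (S : Type u) [Ring S] (n k : ℕ) (M : ModuleCat.{u} S) : Prop :=
  ∀ K : ModuleCat.{u} S, IsSpecialSFP S n K → extVanish S (k + 1) K M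

/-- The `n`-weak flat dimension of a right `R`-module `N` is at most `k`:
`Tor_{k+1}^R(N, K) = 0` for every special super finitely presented left module `K`. -/
def nwfdLE (n k : ℕ) (N : ModuleCat.{u} Rᵐᵒᵖ) : Prop :=
  ∀ K : ModuleCat.{u} R, IsSpecialSFP R n K → torVanish R (k + 1) N K

/-- A right `R`-module `M` is `(n,k)`-weak cotorsion if `Ext^1(N, M) = 0` for every
right module `N` of `n`-weak flat dimension at most `k`. -/
def IsNKWeakCotorsion (n k : ℕ) (M : ModuleCat.{u} Rᵐᵒᵖ) : Prop :=
  ∀ N : ModuleCat.{u} Rᵐᵒᵖ, nwfdLE R n k N → extVanish Rᵐᵒᵖ 1 N M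

/-- Projective dimension at most `k`, via Ext vanishing. -/
def pdLE (S : Type u) [Ring S] (k : ℕ) (K : ModuleCat.{u} S) : Prop :=
  ∀ M : ModuleCat.{u} S, extVanish S (k + 1) K M

/-- Injective dimension at most `k`, via Ext vanishing. -/
def idLE (S : Type u) [Ring S] (k : ℕ) (M : ModuleCat.{u} S) : Prop :=
  ∀ N : ModuleCat.{u} S, extVanish S (k + 1) N M

/-- Flat dimension of a right module at most `k`, via Tor vanishing. -/
def fdLE (k : ℕ) (N : ModuleCat.{u} Rᵐᵒᵖ) : Prop :=
  ∀ A : ModuleCat.{u} R, torVanish R (k + 1) N A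

/-- `l.n.sp.gldim(R) ≤ k` : every special super finitely presented left module has
projective dimension at most `k`. -/
def lnspGldimLE (n k : ℕ) : Prop :=
  ∀ K : ModuleCat.{u} R, IsSpecialSFP R n K → pdLE R k K

/-- `w.gl.dim(R) ≤ k`. -/
def wGldimLE (k : ℕ) : Prop :=
  ∀ N : ModuleCat.{u} Rᵐᵒᵖ, fdLE R k N

/-- A right `R`-module `M` is `k`-cotorsion if `Ext^1(F, M) = 0` for every right
module `F` of flat dimension at most `k`. -/
def IsKCotorsion (k : ℕ) (M : ModuleCat.{u} Rᵐᵒᵖ) : Prop :=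
  ∀ F : ModuleCat.{u} Rᵐᵒᵖ, fdLE R k F → extVanish Rᵐᵒᵖ 1 F M

/-- `φ : E → D` is a `𝒞`-precover of `D`. -/
def IsPrecover (S : Type u) [Ring S] (𝒞 : ModuleCat.{u} S → Prop)
    (E D : ModuleCat.{u} S) (φ : E →ₗ[S] D) : Prop :=
  𝒞 E ∧ ∀ F : ModuleCat.{u} S, 𝒞 F → ∀ g : F →ₗ[S] D, ∃ h : F →ₗ[S] E, φ ∘ₗ h = g

/-- `φ : E → D` is a `𝒞`-cover of `D`. -/
def IsCover (S : Type u) [Ring S] (𝒞 : ModuleCat.{u} S → Prop)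
    (E D : ModuleCat.{u} S) (φ : E →ₗ[S] D) : Prop :=
  IsPrecover S 𝒞 E D φ ∧ ∀ g : E →ₗ[S] E, φ ∘ₗ g = φ → Function.Bijective g

/-- `f : X → F` is a `𝒞`-preenvelope of `X`. -/
def IsPreenvelope (S : Type u) [Ring S] (𝒞 : ModuleCat.{u} S → Prop)
    (X F : ModuleCat.{u} S) (f : X →ₗ[S] F) : Prop :=
  𝒞 F ∧ ∀ F' : ModuleCat.{u} S, 𝒞 F' → ∀ g : X →ₗ[S] F', ∃ h : F →ₗ[S] F', h ∘ₗ f = g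

/-- A module is reduced if it has no nonzero injective submodules. -/
def IsReducedModule (S : Type u) [Ring S] (M : ModuleCat.{u} S) : Prop :=
  ∀ N : Submodule S M, Module.Injective S N → N = ⊥

/-- `D` is an `m`-th cosyzygy of `M`: there is an exact sequence
`0 → M → E^0 → ⋯ → E^{m-1} → D → 0` with each `E^i` injective. -/
def IsCosyzygy (S : Type u) [Ring S] : ℕ → ModuleCat.{u} S → ModuleCat.{u} S → Prop
  | 0, M, D => Nonempty ((M : Type u) ≃ₗ[S] D)
  | m + 1, M, D => ∃ (C E : ModuleCat.{u} S), IsCosyzygy S m M C ∧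
      Module.Injective S E ∧
      ∃ (ι : C →ₗ[S] E) (p : E →ₗ[S] D),
        Function.Injective ι ∧ Function.Surjective p ∧ Function.Exact ι p


/-- A left `R`-module `F` is flat: `Tor_1(A, F) = 0` for every right module `A`
(encoded via character duality, as above). -/
def IsFlatModule (R : Type u) [Ring R] (F : ModuleCat.{u} R) : Prop :=
  ∀ A : ModuleCat.{u} Rᵐᵒᵖ, torVanish R 1 A F

end


/-! ### Auxiliary material for the proof of `stmt13` -/

noncomputable section StmtThirteenAux

open CategoryTheory

lemma ModuleCatAux.subsingleton_of_isZero {S : Type*} [Ring S] {M : ModuleCat S}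
    (h : Limits.IsZero M) : Subsingleton M := by
  have h0 : (𝟙 M : M ⟶ M) = 0 := h.eq_of_src _ _
  have key : ∀ a : M, a = 0 := fun a => by
    calc a = (𝟙 M : M ⟶ M) a := rfl
    _ = (0 : M ⟶ M) a := by rw [h0]
    _ = 0 := LinearMap.zero_apply a
  exact ⟨fun a b => by rw [key a, key b]⟩

/-- Bundled data of a projective resolution of `K` by finitely generated projectives. -/
structure MyRes (R : Type u) [Ring R] (K : ModuleCat.{u} R) where
  P : ℕ → ModuleCat.{u} R
  δ : ∀ i, P (i + 1) →ₗ[R] P i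
  ε : P 0 →ₗ[R] K
  proj : ∀ i, Module.Projective R (P i)
  fin : ∀ i, Module.Finite R (P i)
  surj : Function.Surjective ε
  ex0 : Function.Exact (δ 0) ε
  ex : ∀ i, Function.Exact (δ (i + 1)) (δ i)

namespace MyRes

variable {R : Type u} [Ring R] {K : ModuleCat.{u} R} (r : MyRes R K)

def complex : ChainComplex (ModuleCat.{u} R) ℕ :=
  ChainComplex.of r.P (fun i => ModuleCat.ofHom (r.δ i))
    (fun i => ModuleCat.hom_ext (LinearMap.ext fun x => (r.ex i).apply_apply_eq_zero x))

@[simp] lemma complex_X (i : ℕ) : r.complex.X i = r.P i := rfl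
@[simp] lemma complex_d (i : ℕ) : r.complex.d (i+1) i = ModuleCat.ofHom (r.δ i) := by
  simp [complex, ChainComplex.of.d]

def sc0 : ShortComplex (ModuleCat.{u} R) :=
  ShortComplex.mk (ModuleCat.ofHom (r.δ 0) : r.P 1 ⟶ r.P 0) (ModuleCat.ofHom r.ε : r.P 0 ⟶ K)
    (ModuleCat.hom_ext (LinearMap.ext fun x => r.ex0.apply_apply_eq_zero x))

def resolution : ProjectiveResolution K where
  complex := r.complex
  projective n := (IsProjective.iff_projective (P := r.P n)).1 (r.proj n)
  π := (ChainComplex.toSingle₀Equiv _ _).symm ⟨ModuleCat.ofHom r.ε, by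
    rw [r.complex_d 0]
    exact ModuleCat.hom_ext (LinearMap.ext fun x => r.ex0.apply_apply_eq_zero x)⟩
  quasiIso := ⟨fun n => by
    cases n with
    | zero =>
      rw [ChainComplex.quasiIsoAt₀_iff, ShortComplex.quasiIso_iff_of_zeros']
      · refine (ShortComplex.exact_and_epi_g_iff_of_iso
          (ShortComplex.isoMk (Iso.refl _) (Iso.refl _) (Iso.refl _) ?_ ?_ :
            _ ≅ r.sc0)).2 ⟨?_, (ModuleCat.epi_iff_surjective (r.sc0.g)).2 r.surj⟩
        · simp [sc0]
        · simp [sc0, ChainComplex.toSingle₀Equiv]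
        · rw [ShortComplex.moduleCat_exact_iff]
          intro x hx
          exact (r.ex0 x).1 hx
      all_goals rfl
    | succ n =>
      rw [quasiIsoAt_iff_exactAt']
      · rw [HomologicalComplex.exactAt_iff' _ (n + 2) (n + 1) n (by simp) (by simp)]
        rw [ShortComplex.moduleCat_exact_iff]
        intro x hx
        obtain ⟨y, hy⟩ := (r.ex n x).1 (by simp at hx; exact hx)
        exact ⟨y, by simp; exact hy⟩
      · apply ChainComplex.exactAt_succ_single_obj⟩

lemma extVanish_iff (j : ℕ) (M : ModuleCat.{u} R) :
    extVanish R (j+1) K M ↔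
    ∀ f : r.P (j+1) →ₗ[R] M, f ∘ₗ r.δ (j+1) = 0 →
      ∃ g : r.P j →ₗ[R] M, f = g ∘ₗ r.δ j := by
  show Subsingleton _ ↔ _
  have e : (((Ext ℤ (ModuleCat.{u} R) (j+1)).obj (Opposite.op K)).obj M) ≃
      ((r.resolution.complex.linearYonedaObj ℤ M).homology (j+1)) :=
    ((CategoryTheory.forget _).mapIso
      (ProjectiveResolution.isoExt (R := ℤ) r.resolution (j+1) M)).toEquiv
  rw [Equiv.subsingleton_congr e]
  have hiz : Subsingleton ((r.resolution.complex.linearYonedaObj ℤ M).homology (j+1)) ↔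
      (r.resolution.complex.linearYonedaObj ℤ M).ExactAt (j+1) := by
    rw [HomologicalComplex.exactAt_iff_isZero_homology]
    exact ⟨fun h => ModuleCat.isZero_of_subsingleton _,
      fun h => ModuleCatAux.subsingleton_of_isZero h⟩
  rw [hiz, HomologicalComplex.exactAt_iff' _ j (j+1) (j+2) (by simp) (by simp),
    ShortComplex.moduleCat_exact_iff]
  have hd2 : ∀ (f : r.P (j+1) →ₗ[R] M),
      ((r.resolution.complex.linearYonedaObj ℤ M).d (j+1) (j+2)) (ModuleCat.ofHom f) =
        ModuleCat.ofHom (f ∘ₗ r.δ (j+1)) := by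
    intro f
    rw [ChainComplex.linearYonedaObj_d]
    show r.complex.d (j+2) (j+1) ≫ (ModuleCat.ofHom f : r.complex.X (j+1) ⟶ M) = _
    rw [r.complex_d (j+1)]
    rfl
  have hd1 : ∀ (g : r.P j →ₗ[R] M),
      ((r.resolution.complex.linearYonedaObj ℤ M).d j (j+1)) (ModuleCat.ofHom g) =
        ModuleCat.ofHom (g ∘ₗ r.δ j) := by
    intro g
    rw [ChainComplex.linearYonedaObj_d]
    show r.complex.d (j+1) j ≫ (ModuleCat.ofHom g : r.complex.X j ⟶ M) = _
    rw [r.complex_d j]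
    rfl
  constructor
  · intro hs f hf
    obtain ⟨g, hg⟩ := hs (ModuleCat.ofHom f) (by
      show ((r.resolution.complex.linearYonedaObj ℤ M).d (j+1) (j+2)) (ModuleCat.ofHom f) = 0
      rw [hd2 f, hf]; rfl)
    have hg' : ((r.resolution.complex.linearYonedaObj ℤ M).d j (j+1)) g = ModuleCat.ofHom f := hg
    exact ⟨g.hom, (congrArg ModuleCat.Hom.hom ((hd1 g.hom).symm.trans hg')).symm⟩
  · intro hc f hf
    have hf2 : (ModuleCat.Hom.hom f : r.P (j+1) →ₗ[R] M) ∘ₗ r.δ (j+1) = 0 :=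
      congrArg ModuleCat.Hom.hom ((hd2 (ModuleCat.Hom.hom f)).symm.trans hf)
    obtain ⟨g, hg⟩ := hc (ModuleCat.Hom.hom f) hf2
    refine ⟨ModuleCat.ofHom g, ?_⟩
    show ((r.resolution.complex.linearYonedaObj ℤ M).d j (j+1)) (ModuleCat.ofHom g) = f
    rw [hd1 g, ← hg]
    rfl

end MyRes

section Lemmas

variable {R : Type u} [Ring R]

/-- Every special super finitely presented module has a resolution by f.g. projectives. -/
lemma IsSpecialSFP.toRes {n : ℕ} {K : ModuleCat.{u} R} (hK : IsSpecialSFP R n K) :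
    Nonempty (MyRes R K) := by
  obtain ⟨U, F, d, π, hpj, hfin, hsurj, hex0, hex, hiso⟩ := hK
  cases n with
  | zero =>
    rw [if_pos rfl] at hiso
    obtain ⟨e⟩ := hiso
    refine ⟨⟨F, d, e.symm.toLinearMap ∘ₗ π, hpj, fun i => hfin i (Nat.zero_le i),
      e.symm.surjective.comp hsurj, fun y => ?_, hex⟩⟩
    · exact (e.symm.map_eq_zero_iff.trans (Iff.rfl)).trans (hex0 y)
  | succ m =>
    rw [if_neg (Nat.succ_ne_zero m)] at hiso
    obtain ⟨e⟩ := hiso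
    refine ⟨⟨fun i => F (m+1+i), fun i => d (m+1+i),
      (e.symm.toLinearMap ∘ₗ (d m).rangeRestrict : F (m+1+0) →ₗ[R] K),
      fun i => hpj (m+1+i), fun i => hfin (m+1+i) (Nat.le_add_right _ _),
      e.symm.surjective.comp (d m).surjective_rangeRestrict, fun y => ?_,
      fun i => hex (m+1+i)⟩⟩
    · calc (e.symm.toLinearMap ∘ₗ (d m).rangeRestrict) y = 0
          ↔ (d m).rangeRestrict y = 0 := e.symm.map_eq_zero_iff
      _ ↔ d m y = 0 := by
          rw [Subtype.ext_iff]; rfl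
      _ ↔ y ∈ Set.range (d (m+1)) := hex m y


lemma MyRes.cond_free {K : ModuleCat.{u} R} (r : MyRes R K) (j : ℕ) (ι : Type u)
    (hR : ∀ f : r.P (j+1) →ₗ[R] R, f ∘ₗ r.δ (j+1) = 0 → ∃ g : r.P j →ₗ[R] R, f = g ∘ₗ r.δ j) :
    ∀ v : r.P (j+1) →ₗ[R] (ι →₀ R), v ∘ₗ r.δ (j+1) = 0 →
      ∃ w : r.P j →ₗ[R] (ι →₀ R), v = w ∘ₗ r.δ j := by
  classical
  intro v hv
  obtain ⟨s, hs⟩ : (⊤ : Submodule R (r.P (j+1))).FG := (r.fin (j+1)).1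
  set T := s.biUnion (fun p => (v p).support) with hT
  have hvx : ∀ x, x ∉ T → (Finsupp.lapply x : (ι →₀ R) →ₗ[R] R) ∘ₗ v = 0 := by
    intro x hx
    apply LinearMap.ext_on hs
    intro p hp
    show (v p) x = 0
    by_contra hcon
    exact hx (Finset.mem_biUnion.2 ⟨p, hp, Finsupp.mem_support_iff.2 hcon⟩)
  have hall : ∀ x : ι, ∃ g : r.P j →ₗ[R] R,
      (Finsupp.lapply x : (ι →₀ R) →ₗ[R] R) ∘ₗ v = g ∘ₗ r.δ j := by
    intro x
    by_cases hx : x ∈ T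
    · exact hR _ (by rw [LinearMap.comp_assoc, hv, LinearMap.comp_zero])
    · exact ⟨0, by rw [hvx x hx, LinearMap.zero_comp]⟩
  choose u hu using hall
  refine ⟨∑ x ∈ T, (Finsupp.lsingle x : R →ₗ[R] (ι →₀ R)) ∘ₗ u x, ?_⟩
  apply LinearMap.ext; intro p
  apply Finsupp.ext; intro y
  have hrhs : (((∑ x ∈ T, (Finsupp.lsingle x : R →ₗ[R] (ι →₀ R)) ∘ₗ u x) ∘ₗ r.δ j) p) y
      = if y ∈ T then u y (r.δ j p) else 0 := by
    calc (((∑ x ∈ T, (Finsupp.lsingle x : R →ₗ[R] (ι →₀ R)) ∘ₗ u x) ∘ₗ r.δ j) p) y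
        = (∑ x ∈ T, (Finsupp.single x (u x (r.δ j p)) : ι →₀ R)) y := by
          rw [LinearMap.comp_apply, LinearMap.sum_apply]
          rfl
    _ = ∑ x ∈ T, ((Finsupp.single x (u x (r.δ j p)) : ι →₀ R)) y :=
          Finsupp.finset_sum_apply _ _ _
    _ = ∑ x ∈ T, if x = y then u x (r.δ j p) else 0 :=
          Finset.sum_congr rfl (fun x _ => Finsupp.single_apply)
    _ = if y ∈ T then u y (r.δ j p) else 0 := Finset.sum_ite_eq' T y _
  rw [hrhs]
  by_cases hy : y ∈ T
  · rw [if_pos hy]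
    have := congrArg (fun (t : r.P (j+1) →ₗ[R] R) => t p) (hu y)
    exact this
  · rw [if_neg hy]
    have := congrArg (fun (t : r.P (j+1) →ₗ[R] R) => t p) (hvx y hy)
    exact this

/-- Dimension shifting: one can trade a degree of `Ext` against passing to a syzygy. -/
lemma IsSpecialSFP.shift {n : ℕ} {K : ModuleCat.{u} R} (hK : IsSpecialSFP R n K) :
    ∃ K' : ModuleCat.{u} R, IsSpecialSFP R n K' ∧
      ∀ (j : ℕ) (M : ModuleCat.{u} R), (extVanish R (j+2) K M ↔ extVanish R (j+1) K' M) := by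
  obtain ⟨U, F, d, π, hpj, hfin, hsurj, hex0, hex, hiso⟩ := hK
  cases n with
  | zero =>
    rw [if_pos rfl] at hiso
    obtain ⟨e⟩ := hiso
    refine ⟨ModuleCat.of R (LinearMap.range (d 0)), ?_, ?_⟩
    · exact ⟨ModuleCat.of R (LinearMap.range (d 0)), fun i => F (i+1), fun i => d (i+1),
        (d 0).rangeRestrict, fun i => hpj (i+1), fun i _ => hfin (i+1) (Nat.zero_le _),
        (d 0).surjective_rangeRestrict,
        fun y => ((by rw [Subtype.ext_iff]; rfl :
          (d 0).rangeRestrict y = 0 ↔ d 0 y = 0)).trans (hex 0 y),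
        fun i => hex (i+1), by rw [if_pos rfl]; exact ⟨LinearEquiv.refl R _⟩⟩
    · intro j M
      let rK : MyRes R K := ⟨F, d, e.symm.toLinearMap ∘ₗ π, hpj,
        fun i => hfin i (Nat.zero_le i), e.symm.surjective.comp hsurj,
        fun y => (e.symm.map_eq_zero_iff).trans (hex0 y), hex⟩
      let rK' : MyRes R (ModuleCat.of R (LinearMap.range (d 0))) :=
        ⟨fun i => F (i+1), fun i => d (i+1), (d 0).rangeRestrict,
        fun i => hpj (i+1), fun i => hfin (i+1) (Nat.zero_le _),
        (d 0).surjective_rangeRestrict,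
        fun y => ((by rw [Subtype.ext_iff]; rfl :
          (d 0).rangeRestrict y = 0 ↔ d 0 y = 0)).trans (hex 0 y),
        fun i => hex (i+1)⟩
      exact (rK.extVanish_iff (j+1) M).trans ((rK'.extVanish_iff j M).symm)
  | succ m =>
    rw [if_neg (Nat.succ_ne_zero m)] at hiso
    obtain ⟨e⟩ := hiso
    refine ⟨ModuleCat.of R (LinearMap.range (d (m+1))), ?_, ?_⟩
    · refine ⟨ModuleCat.of R (LinearMap.range (d 0)), fun i => F (i+1), fun i => d (i+1),
        (d 0).rangeRestrict, fun i => hpj (i+1), fun i hi => hfin (i+1) (by omega),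
        (d 0).surjective_rangeRestrict,
        fun y => ((by rw [Subtype.ext_iff]; rfl :
          (d 0).rangeRestrict y = 0 ↔ d 0 y = 0)).trans (hex 0 y),
        fun i => hex (i+1), ?_⟩
      rw [if_neg (Nat.succ_ne_zero m)]
      exact ⟨LinearEquiv.refl R _⟩
    · intro j M
      let rK : MyRes R K := ⟨fun i => F (m+1+i), fun i => d (m+1+i),
        (e.symm.toLinearMap ∘ₗ (d m).rangeRestrict : F (m+1+0) →ₗ[R] K),
        fun i => hpj (m+1+i), fun i => hfin (m+1+i) (Nat.le_add_right _ _),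
        e.symm.surjective.comp (d m).surjective_rangeRestrict,
        fun y => (e.symm.map_eq_zero_iff.trans (by rw [Subtype.ext_iff]; rfl :
          (d m).rangeRestrict y = 0 ↔ d m y = 0)).trans (hex m y),
        fun i => hex (m+1+i)⟩
      let rK' : MyRes R (ModuleCat.of R (LinearMap.range (d (m+1)))) :=
        ⟨fun i => F (m+1+i+1), fun i => d (m+1+i+1),
        ((d (m+1)).rangeRestrict : F (m+1+0+1) →ₗ[R] LinearMap.range (d (m+1))),
        fun i => hpj (m+1+i+1), fun i => hfin (m+1+i+1) (by omega),
        (d (m+1)).surjective_rangeRestrict,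
        fun y => ((by rw [Subtype.ext_iff]; rfl :
          (d (m+1)).rangeRestrict y = 0 ↔ d (m+1) y = 0)).trans (hex (m+1) y),
        fun i => hex (m+1+i+1)⟩
      exact (rK.extVanish_iff (j+1) M).trans ((rK'.extVanish_iff j M).symm)

/-- The descending induction step. -/
lemma stepDown {n j : ℕ}
    (hGR : ∀ K : ModuleCat.{u} R, IsSpecialSFP R n K →
      extVanish R (j+1) K (ModuleCat.of R R))
    (hG1 : ∀ K : ModuleCat.{u} R, IsSpecialSFP R n K →
      ∀ M : ModuleCat.{u} R, extVanish R (j+2) K M) :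
    ∀ K : ModuleCat.{u} R, IsSpecialSFP R n K →
      ∀ M : ModuleCat.{u} R, extVanish R (j+1) K M := by
  intro K hK M
  obtain ⟨r⟩ := hK.toRes
  rw [r.extVanish_iff j M]
  intro f hf
  set εM := Finsupp.linearCombination R (id : M → M) with hεM
  have hsurjεM : Function.Surjective εM :=
    Finsupp.linearCombination_surjective R Function.surjective_id
  have : Module.Projective R (r.P (j+1)) := r.proj (j+1)
  obtain ⟨ft, hft⟩ := Module.projective_lifting_property εM f hsurjεM
  have hker : ∀ x : r.P (j+1+1), (ft ∘ₗ r.δ (j+1)) x ∈ LinearMap.ker εM := by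
    intro x
    rw [LinearMap.mem_ker]
    calc εM (ft (r.δ (j+1) x)) = (εM ∘ₗ ft) (r.δ (j+1) x) := rfl
    _ = f (r.δ (j+1) x) := by rw [hft]
    _ = (f ∘ₗ r.δ (j+1)) x := rfl
    _ = 0 := by rw [hf]; rfl
  set h' : r.P (j+1+1) →ₗ[R] LinearMap.ker εM :=
    LinearMap.codRestrict _ (ft ∘ₗ r.δ (j+1)) hker with hh'
  have hcond := (r.extVanish_iff (j+1) (ModuleCat.of R (LinearMap.ker εM))).1
    (hG1 K hK (ModuleCat.of R (LinearMap.ker εM)))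
  obtain ⟨u, hu⟩ := hcond h' (by
    apply LinearMap.ext; intro x
    apply Subtype.ext
    show ft (r.δ (j+1) (r.δ (j+1+1) x)) = 0
    rw [(r.ex (j+1)).apply_apply_eq_zero x, map_zero])
  set v : r.P (j+1) →ₗ[R] ((M : Type u) →₀ R) :=
    ft - (LinearMap.ker εM).subtype ∘ₗ u with hvdef
  have hvz : v ∘ₗ r.δ (j+1) = 0 := by
    apply LinearMap.ext; intro x
    have h1 : (LinearMap.ker εM).subtype (u (r.δ (j+1) x)) = ft (r.δ (j+1) x) :=
      congrArg (fun (t : r.P (j+1+1) →ₗ[R] (ModuleCat.of R (LinearMap.ker εM))) =>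
        (LinearMap.ker εM).subtype (t x)) hu.symm
    show ft (r.δ (j+1) x) - (LinearMap.ker εM).subtype (u (r.δ (j+1) x)) = 0
    rw [h1, sub_self]
  have hRcond := (r.extVanish_iff j (ModuleCat.of R R)).1 (hGR K hK)
  obtain ⟨w, hw⟩ := r.cond_free j (M : Type u) hRcond v hvz
  refine ⟨εM ∘ₗ w, ?_⟩
  apply LinearMap.ext; intro x
  have h3 : εM ((LinearMap.ker εM).subtype (u x)) = 0 := (u x).2
  calc f x = εM (ft x) := by rw [← hft]; rfl
  _ = (εM (ft x) - εM ((LinearMap.ker εM).subtype (u x)))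
      + εM ((LinearMap.ker εM).subtype (u x)) := by rw [sub_add_cancel]
  _ = εM (v x) + εM ((LinearMap.ker εM).subtype (u x)) := by
      rw [show εM (v x) = εM (ft x) - εM ((LinearMap.ker εM).subtype (u x)) from
        map_sub εM _ _]
  _ = εM (v x) := by rw [h3, add_zero]
  _ = εM (w (r.δ j x)) := by
      rw [show v x = w (r.δ j x) from congrArg (fun (t : r.P (j+1) →ₗ[R]
        ((M : Type u) →₀ R)) => t x) hw]
  _ = (εM ∘ₗ w) (r.δ j x) := rfl

end Lemmas

end StmtThirteenAux

/-- if `l.n.sp.gldim(R)` is finite, it equals `n-wid(_R R)`; i.e. for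
every `k`, `l.n.sp.gldim(R) ≤ k` iff `Ext^{k+1}(K, R) = 0` for every special super
finitely presented left module `K`. -/
theorem stmt13 (R : Type u) [Ring R] (n : ℕ)
    (h : ∃ k, lnspGldimLE R n k) :
    ∀ k, lnspGldimLE R n k ↔ nwidLE R n k (ModuleCat.of R R) := by
  obtain ⟨k0, hk0⟩ := h
  intro k
  constructor
  · intro hg K hK
    exact hg K hK (ModuleCat.of R R)
  · intro hw
    have upR : ∀ j, (∀ K : ModuleCat.{u} R, IsSpecialSFP R n K →
          extVanish R (j+1) K (ModuleCat.of R R)) →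
        (∀ K : ModuleCat.{u} R, IsSpecialSFP R n K →
          extVanish R (j+2) K (ModuleCat.of R R)) := by
      intro j hj K hK
      obtain ⟨K', hK', hiff⟩ := hK.shift
      exact (hiff j (ModuleCat.of R R)).2 (hj K' hK')
    have goodR : ∀ m, ∀ K : ModuleCat.{u} R, IsSpecialSFP R n K →
        extVanish R (k+m+1) K (ModuleCat.of R R) := by
      intro m
      induction m with
      | zero => exact hw
      | succ m ih => exact upR (k+m) ih
    have up : ∀ j, (∀ K : ModuleCat.{u} R, IsSpecialSFP R n K →
          ∀ M : ModuleCat.{u} R, extVanish R (j+1) K M) →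
        (∀ K : ModuleCat.{u} R, IsSpecialSFP R n K →
          ∀ M : ModuleCat.{u} R, extVanish R (j+2) K M) := by
      intro j hj K hK M
      obtain ⟨K', hK', hiff⟩ := hK.shift
      exact (hiff j M).2 (hj K' hK' M)
    have good : ∀ m, ∀ K : ModuleCat.{u} R, IsSpecialSFP R n K →
        ∀ M : ModuleCat.{u} R, extVanish R (k0+m+1) K M := by
      intro m
      induction m with
      | zero => exact fun K hK M => hk0 K hK M
      | succ m ih => exact up (k0+m) ih
    have down : ∀ d j, k ≤ j → k0 ≤ j + d → ∀ K : ModuleCat.{u} R,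
        IsSpecialSFP R n K → ∀ M : ModuleCat.{u} R, extVanish R (j+1) K M := by
      intro d
      induction d with
      | zero =>
        intro j hkj hk0j K hK M
        have hgj := good (j - k0) K hK M
        have hj : k0 + (j - k0) = j := by omega
        rwa [hj] at hgj
      | succ d ih =>
        intro j hkj hk0j K hK M
        by_cases hc : k0 ≤ j + d
        · exact ih j hkj hc K hK M
        · have hGR : ∀ K : ModuleCat.{u} R, IsSpecialSFP R n K →
              extVanish R (j+1) K (ModuleCat.of R R) := by
            intro K hK
            have hgj := goodR (j - k) K hK
            have hj : k + (j - k) = j := by omega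
            rwa [hj] at hgj
          have hG1 : ∀ K : ModuleCat.{u} R, IsSpecialSFP R n K →
              ∀ M : ModuleCat.{u} R, extVanish R (j+2) K M :=
            fun K hK M => ih (j+1) (by omega) (by omega) K hK M
          exact stepDown hGR hG1 K hK M
    exact fun K hK M => down k0 k le_rfl (by omega) K hK M
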